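/- arXiv:2506.05454 — 3 statements merged into one kernel-verified Lean document; each statement's English description precedes it below -/
import Mathlib

section
/- Let T be a symmetric 3-tensor on R^d (i.e., T_{ijk} invariant under permutation of indices) and u ~ N(0, I_d). Then E[(Σ_{i,j,k} T_{ijk} u_i u_j u_k)^2 ||u||^2] = 9(d+6) Σ_k (Σ_i T_{iik})^2 + 6(d+6) Σ_{i,j,k} T_{ijk}^2. -/
open MeasureTheory ProbabilityTheory Real NNReal ENNReal

/-- The standard Gaussian measure on `ℝ^d`, with i.i.d. `N(0,1)` coordinates. -/
noncomputable def stdGaussian (d : ℕ) : Measure (Fin d → ℝ) :=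
  Measure.pi fun _ => gaussianReal 0 1

section Moments

lemma integrable_pow_gauss (k : ℕ) :
    Integrable (fun x : ℝ => x ^ k * Real.exp (-(x ^ 2 / 2))) := by
  have h := integrable_rpow_mul_exp_neg_mul_sq (b := 1/2) (by norm_num) (s := (k : ℝ))
    (lt_of_lt_of_le (by norm_num) (Nat.cast_nonneg k))
  have he : ∀ x : ℝ, x ^ ((k : ℝ)) * Real.exp (-(1/2) * x ^ 2)
      = x ^ k * Real.exp (-(x ^ 2 / 2)) := by
    intro x
    rw [Real.rpow_natCast]
    ring_nf
  simpa only [he] using h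

lemma pdf_eq (x : ℝ) : gaussianPDFReal 0 1 x = (Real.sqrt (2 * π))⁻¹ * Real.exp (-(x ^ 2 / 2)) := by
  rw [gaussianPDFReal]
  norm_num
  rw [neg_div]
  exact Or.inl rfl

lemma M_eq_lebesgue (n : ℕ) :
    (∫ x, x ^ n ∂(gaussianReal 0 1))
      = ∫ x, x ^ n * ((Real.sqrt (2 * π))⁻¹ * Real.exp (-(x ^ 2 / 2))) := by
  have h1 : gaussianReal 0 1 = volume.withDensity (gaussianPDF 0 1) :=
    gaussianReal_of_var_ne_zero 0 one_ne_zero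
  have h2 : gaussianPDF 0 1 = fun x => (((gaussianPDFReal 0 1 x).toNNReal : ℝ≥0) : ℝ≥0∞) := by
    funext x; rfl
  rw [h1, h2, integral_withDensity_eq_integral_smul ((measurable_gaussianPDFReal 0 1).real_toNNReal)]
  congr 1
  funext x
  rw [NNReal.smul_def, smul_eq_mul, Real.coe_toNNReal _ (gaussianPDFReal_nonneg _ _ _), pdf_eq]
  ring

lemma J_rec (n : ℕ) :
    (∫ x : ℝ, x ^ (n + 2) * Real.exp (-(x ^ 2 / 2)))
      = (n + 1 : ℝ) * ∫ x : ℝ, x ^ n * Real.exp (-(x ^ 2 / 2)) := by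
  set u : ℝ → ℝ := fun x => x ^ (n + 1) with hu_def
  set u' : ℝ → ℝ := fun x => (n + 1 : ℝ) * x ^ n with hu'_def
  set v : ℝ → ℝ := fun x => -Real.exp (-(x ^ 2 / 2)) with hv_def
  set v' : ℝ → ℝ := fun x => x * Real.exp (-(x ^ 2 / 2)) with hv'_def
  have hu : ∀ x : ℝ, HasDerivAt u (u' x) x := by
    intro x
    have := hasDerivAt_pow (n + 1) x
    simpa [hu_def, hu'_def] using this
  have hv : ∀ x : ℝ, HasDerivAt v (v' x) x := by
    intro x
    have h1 : HasDerivAt (fun y : ℝ => -(y ^ 2 / 2)) (-x) x := by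
      have := ((hasDerivAt_pow 2 x).div_const 2).neg
      norm_num at this
      exact this
    have h3 := (h1.exp).neg
    have h4 : HasDerivAt v (-(Real.exp (-(x ^ 2 / 2)) * -x)) x := h3
    convert h4 using 1
    show x * Real.exp (-(x ^ 2 / 2)) = _
    ring
  have key : Integrable (fun x : ℝ => x ^ (n + 2) * Real.exp (-(x ^ 2 / 2))) :=
    integrable_pow_gauss (n + 2)
  have huv' : Integrable (u * v') := by
    have : (u * v') = fun x : ℝ => x ^ (n + 2) * Real.exp (-(x ^ 2 / 2)) := by
      funext x; simp [hu_def, hv'_def]; ring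
    rw [this]; exact key
  have hu'v : Integrable (u' * v) := by
    have : (u' * v) = fun x : ℝ => -((n + 1 : ℝ) * (x ^ n * Real.exp (-(x ^ 2 / 2)))) := by
      funext x; simp [hu'_def, hv_def]; ring
    rw [this]
    exact (((integrable_pow_gauss n).const_mul _).neg)
  have huv : Integrable (u * v) := by
    have : (u * v) = fun x : ℝ => -(x ^ (n + 1) * Real.exp (-(x ^ 2 / 2))) := by
      funext x; simp [hu_def, hv_def]
    rw [this]
    exact (integrable_pow_gauss (n + 1)).neg
  have h := integral_mul_deriv_eq_deriv_mul_of_integrable (fun x _ => hu x) (fun x _ => hv x) huv' hu'v huv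
  have hL : (∫ x, u x * v' x) = ∫ x : ℝ, x ^ (n + 2) * Real.exp (-(x ^ 2 / 2)) := by
    congr 1; funext x; simp [hu_def, hv'_def]; ring
  have hR : (∫ x, u' x * v x) = -((n + 1 : ℝ) * ∫ x : ℝ, x ^ n * Real.exp (-(x ^ 2 / 2))) := by
    rw [show (fun x => u' x * v x) = fun x : ℝ => -((n + 1 : ℝ) * (x ^ n * Real.exp (-(x ^ 2 / 2)))) from by
      funext x; simp [hu'_def, hv_def]; ring]
    rw [integral_neg, integral_const_mul]
  rw [hL, hR] at h
  rw [h]; ring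

noncomputable def Mm (n : ℕ) : ℝ := ∫ x, x ^ n ∂(gaussianReal 0 1)

lemma gauss_smul_eq (k : ℕ) :
    (fun x : ℝ => (gaussianPDFReal 0 1 x).toNNReal • (x ^ k : ℝ))
      = fun x : ℝ => (Real.sqrt (2 * π))⁻¹ * (x ^ k * Real.exp (-(x ^ 2 / 2))) := by
  funext x
  rw [NNReal.smul_def, smul_eq_mul, Real.coe_toNNReal _ (gaussianPDFReal_nonneg _ _ _), pdf_eq]
  ring

lemma integrable_pow_gaussianReal (k : ℕ) :
    Integrable (fun x : ℝ => x ^ k) (gaussianReal 0 1) := by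
  rw [gaussianReal_of_var_ne_zero 0 one_ne_zero,
    show gaussianPDF 0 1 = fun x => (((gaussianPDFReal 0 1 x).toNNReal : ℝ≥0) : ℝ≥0∞) from rfl,
    integrable_withDensity_iff_integrable_smul ((measurable_gaussianPDFReal 0 1).real_toNNReal)]
  rw [gauss_smul_eq k]
  exact (integrable_pow_gauss k).const_mul _

lemma Mm_rec (n : ℕ) : Mm (n + 2) = (n + 1 : ℝ) * Mm n := by
  have conv : ∀ k : ℕ, Mm k = (Real.sqrt (2 * π))⁻¹ * ∫ x : ℝ, x ^ k * Real.exp (-(x ^ 2 / 2)) := by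
    intro k
    rw [Mm, M_eq_lebesgue]
    rw [show (fun x : ℝ => x ^ k * ((Real.sqrt (2 * π))⁻¹ * Real.exp (-(x ^ 2 / 2))))
      = fun x : ℝ => (Real.sqrt (2 * π))⁻¹ * (x ^ k * Real.exp (-(x ^ 2 / 2))) from by
        funext x; ring]
    rw [integral_const_mul]
  rw [conv, conv, J_rec]
  ring

lemma Mm_zero : Mm 0 = 1 := by simp [Mm]

lemma gauss_map_neg : (gaussianReal 0 1).map (fun x => -x) = gaussianReal 0 1 := by
  have h := @gaussianReal_map_const_mul 0 1 (-1)
  have h2 : (⟨(-1 : ℝ)^2, sq_nonneg _⟩ : ℝ≥0) = 1 := by ext; norm_num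
  simp only [h2, mul_zero, mul_one, neg_one_mul] at h
  convert h using 2
  ext; simp

lemma Mm_one : Mm 1 = 0 := by
  have h : Mm 1 = - Mm 1 := by
    calc Mm 1 = ∫ x, x ^ 1 ∂(gaussianReal 0 1) := rfl
    _ = ∫ x, x ^ 1 ∂((gaussianReal 0 1).map (fun x => -x)) := by rw [gauss_map_neg]
    _ = ∫ x, (-x) ^ 1 ∂(gaussianReal 0 1) := by
        rw [integral_map (by fun_prop) (by fun_prop)]
    _ = - Mm 1 := by
        simp only [pow_one, Mm]
        exact integral_neg _
  linarith

noncomputable def gms : MeasureSpace ℝ := ⟨gaussianReal 0 1⟩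

lemma integral_monomial {d : ℕ} (e : Fin d → ℕ) :
    ∫ u, ∏ m, (u m) ^ (e m) ∂(stdGaussian d) = ∏ m, Mm (e m) := by
  have h := MeasureTheory.integral_fintype_prod_eq_prod (𝕜 := ℝ) (ι := Fin d) (E := fun _ => ℝ)
    (fun m x => x ^ (e m)) (μ := fun _ => gaussianReal 0 1)
  exact h

lemma integrable_monomial {d : ℕ} (e : Fin d → ℕ) :
    Integrable (fun u : Fin d → ℝ => ∏ m, (u m) ^ (e m)) (stdGaussian d) := by
  have h := MeasureTheory.Integrable.fintype_prod (𝕜 := ℝ) (ι := Fin d) (E := ℝ)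
    (f := fun m x => x ^ (e m)) (μ := fun _ => gaussianReal 0 1)
    (fun m => integrable_pow_gaussianReal (e m))
  exact h

end Moments

def ind {d : ℕ} (a m : Fin d) : ℕ := if a = m then 1 else 0

noncomputable def dl {d : ℕ} (a b : Fin d) : ℝ := if a = b then 1 else 0

lemma ind_self {d : ℕ} (a : Fin d) : ind a a = 1 := by simp [ind]

lemma ind_ne {d : ℕ} {a m : Fin d} (h : a ≠ m) : ind a m = 0 := by simp [ind, h]

lemma cast_ind {d : ℕ} (b a : Fin d) : ((ind b a : ℕ) : ℝ) = dl a b := by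
  by_cases h : a = b
  · subst h; simp [ind, dl]
  · rw [ind_ne (fun hh => h hh.symm)]; simp [dl, h]

lemma dl_mul_congr {d : ℕ} {a x : Fin d} {P Q : ℝ} (h : a = x → P = Q) :
    dl a x * P = dl a x * Q := by
  by_cases hax : a = x
  · rw [h hax]
  · simp [dl, hax]

lemma prod_split {d : ℕ} (a : Fin d) (f : Fin d → ℝ) :
    (∏ m, f m) = f a * ∏ m ∈ Finset.univ.erase a, f m :=
  (Finset.mul_prod_erase _ f (Finset.mem_univ a)).symm

lemma Mm_succ_succ (c : ℕ) : Mm (c + 1) = (c : ℝ) * Mm (c - 1) := by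
  cases c with
  | zero => simp [Mm_one]
  | succ k =>
      have h := Mm_rec k
      push_cast
      simpa [Nat.succ_sub_one] using h

lemma peel {d : ℕ} (a : Fin d) (g : Fin d → ℕ) :
    (∏ m, Mm (ind a m + g m)) = (g a : ℝ) * ∏ m, Mm (g m - ind a m) := by
  rw [prod_split a (fun m => Mm (ind a m + g m)),
    prod_split a (fun m => Mm (g m - ind a m))]
  rw [Finset.prod_congr rfl (fun m hm => by
    rw [ind_ne (Ne.symm (Finset.ne_of_mem_erase hm))] :
      ∀ m ∈ Finset.univ.erase a, Mm (ind a m + g m) = Mm (0 + g m))]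
  rw [Finset.prod_congr rfl (fun m hm => by
    rw [ind_ne (Ne.symm (Finset.ne_of_mem_erase hm))] :
      ∀ m ∈ Finset.univ.erase a, Mm (g m - ind a m) = Mm (g m - 0))]
  simp only [ind_self, zero_add, Nat.sub_zero]
  rw [show (1 : ℕ) + g a = g a + 1 from by omega, Mm_succ_succ]
  ring

lemma V2 {d : ℕ} (a b : Fin d) : (∏ m, Mm (ind a m + ind b m)) = dl a b := by
  rw [peel a (fun m => ind b m)]
  by_cases h : a = b
  · subst h
    simp [ind_self, dl, Mm_zero]
  · rw [ind_ne (fun hh => h hh.symm)]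
    simp [dl, h]

lemma V4 {d : ℕ} (a b c e : Fin d) :
    (∏ m, Mm (ind a m + ind b m + ind c m + ind e m))
      = dl a b * dl c e + dl a c * dl b e + dl a e * dl b c := by
  have hre : ∀ m, ind a m + ind b m + ind c m + ind e m
      = ind a m + (ind b m + ind c m + ind e m) := fun m => by omega
  simp only [hre]
  rw [peel a (fun m => ind b m + ind c m + ind e m)]
  push_cast [cast_ind]
  rw [add_mul, add_mul]
  congr 1
  · congr 1
    · refine dl_mul_congr fun hab => ?_
      subst hab
      rw [Finset.prod_congr rfl (fun m _ => by
        rw [show ind a m + ind c m + ind e m - ind a m = ind c m + ind e m from by omega])]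
      exact V2 c e
    · refine dl_mul_congr fun hac => ?_
      subst hac
      rw [Finset.prod_congr rfl (fun m _ => by
        rw [show ind b m + ind a m + ind e m - ind a m = ind b m + ind e m from by omega])]
      exact V2 b e
  · refine dl_mul_congr fun hae => ?_
    subst hae
    rw [Finset.prod_congr rfl (fun m _ => by
      rw [show ind b m + ind c m + ind a m - ind a m = ind b m + ind c m from by omega])]
    exact V2 b c

lemma V6 {d : ℕ} (a b c x y z : Fin d) :
    (∏ m, Mm (ind a m + ind b m + ind c m + ind x m + ind y m + ind z m))
      = dl a b * (dl c x * dl y z + dl c y * dl x z + dl c z * dl x y)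
      + dl a c * (dl b x * dl y z + dl b y * dl x z + dl b z * dl x y)
      + dl a x * (dl b c * dl y z + dl b y * dl c z + dl b z * dl c y)
      + dl a y * (dl b c * dl x z + dl b x * dl c z + dl b z * dl c x)
      + dl a z * (dl b c * dl x y + dl b x * dl c y + dl b y * dl c x) := by
  have hre : ∀ m, ind a m + ind b m + ind c m + ind x m + ind y m + ind z m
      = ind a m + (ind b m + ind c m + ind x m + ind y m + ind z m) := fun m => by omega
  simp only [hre]
  rw [peel a (fun m => ind b m + ind c m + ind x m + ind y m + ind z m)]
  push_cast [cast_ind]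
  rw [add_mul, add_mul, add_mul, add_mul]
  congr 1
  · congr 1
    · congr 1
      · congr 1
        · refine dl_mul_congr fun h => ?_
          subst h
          rw [Finset.prod_congr rfl (fun m _ => by
            rw [show ind a m + ind c m + ind x m + ind y m + ind z m - ind a m
              = ind c m + ind x m + ind y m + ind z m from by omega])]
          exact V4 c x y z
        · refine dl_mul_congr fun h => ?_
          subst h
          rw [Finset.prod_congr rfl (fun m _ => by
            rw [show ind b m + ind a m + ind x m + ind y m + ind z m - ind a m
              = ind b m + ind x m + ind y m + ind z m from by omega])]
          exact V4 b x y z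
      · refine dl_mul_congr fun h => ?_
        subst h
        rw [Finset.prod_congr rfl (fun m _ => by
          rw [show ind b m + ind c m + ind a m + ind y m + ind z m - ind a m
            = ind b m + ind c m + ind y m + ind z m from by omega])]
        exact V4 b c y z
    · refine dl_mul_congr fun h => ?_
      subst h
      rw [Finset.prod_congr rfl (fun m _ => by
        rw [show ind b m + ind c m + ind x m + ind a m + ind z m - ind a m
          = ind b m + ind c m + ind x m + ind z m from by omega])]
      exact V4 b c x z
  · refine dl_mul_congr fun h => ?_
    subst h
    rw [Finset.prod_congr rfl (fun m _ => by
      rw [show ind b m + ind c m + ind x m + ind y m + ind a m - ind a m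
        = ind b m + ind c m + ind x m + ind y m from by omega])]
    exact V4 b c x y

lemma sumA {d : ℕ} (e : Fin d → ℕ) :
    (∑ n, ∏ m, Mm (e m + 2 * ind n m))
      = (((∑ m, e m : ℕ) : ℝ) + d) * ∏ m, Mm (e m) := by
  have hterm : ∀ n : Fin d, (∏ m, Mm (e m + 2 * ind n m))
      = ((e n : ℝ) + 1) * ∏ m, Mm (e m) := by
    intro n
    rw [prod_split n (fun m => Mm (e m + 2 * ind n m)), prod_split n (fun m => Mm (e m))]
    rw [Finset.prod_congr rfl (fun m hm => by
      rw [ind_ne (Ne.symm (Finset.ne_of_mem_erase hm))] :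
        ∀ m ∈ Finset.univ.erase n, Mm (e m + 2 * ind n m) = Mm (e m + 2 * 0))]
    simp only [ind_self, mul_zero, add_zero, mul_one]
    rw [Mm_rec]
    ring
  rw [Finset.sum_congr rfl (fun n _ => hterm n), ← Finset.sum_mul]
  congr 1
  push_cast
  rw [Finset.sum_add_distrib]
  simp [Finset.card_univ]

set_option maxHeartbeats 1000000 in
lemma contract {d : ℕ} (T : Fin d → Fin d → Fin d → ℝ)
    (hsymm : ∀ i j k : Fin d, T i j k = T j i k ∧ T i j k = T i k j) :
    (∑ i, ∑ j, ∑ k, ∑ a, ∑ b, ∑ c, T i j k * T a b c *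
        ∏ m, Mm (ind i m + ind j m + ind k m + ind a m + ind b m + ind c m))
      = 9 * (∑ k, (∑ i, T i i k) ^ 2) + 6 * ∑ i, ∑ j, ∑ k, (T i j k) ^ 2 := by
  have hs : ∀ i j k, T i j k = T j i k := fun i j k => (hsymm i j k).1
  have ht : ∀ i j k, T i j k = T i k j := fun i j k => (hsymm i j k).2
  have h3 : ∀ i j k, T i j k = T j k i := fun i j k => (hs i j k).trans (ht j i k)
  have h4 : ∀ i j k, T i j k = T k i j := fun i j k => (h3 i j k).trans (h3 j k i)
  have h5 : ∀ i j k, T i j k = T k j i := fun i j k => (h3 i j k).trans (hs j k i)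
  set XX := ∑ k, ∑ i, ∑ j, T i i k * T j j k with hXX
  set Y := ∑ i, ∑ j, ∑ k, T i j k * T i j k with hY
  have hXeq : (∑ k, (∑ i, T i i k) ^ 2) = XX := by
    refine Finset.sum_congr rfl fun k _ => ?_
    rw [sq, Finset.sum_mul_sum]
  have hYeq : (∑ i, ∑ j, ∑ k, (T i j k) ^ 2) = Y := by
    simp only [hY, sq]
  rw [hXeq, hYeq]
  have h1 : (∑ i, ∑ j, ∑ k, ∑ a, ∑ b, ∑ c, T i j k * T a b c *
        ∏ m, Mm (ind i m + ind j m + ind k m + ind a m + ind b m + ind c m))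
      = ∑ i, ∑ j, ∑ k, ∑ a, ∑ b, ∑ c, T i j k * T a b c *
        (dl i j * (dl k a * dl b c + dl k b * dl a c + dl k c * dl a b)
        + dl i k * (dl j a * dl b c + dl j b * dl a c + dl j c * dl a b)
        + dl i a * (dl j k * dl b c + dl j b * dl k c + dl j c * dl k b)
        + dl i b * (dl j k * dl a c + dl j a * dl k c + dl j c * dl k a)
        + dl i c * (dl j k * dl a b + dl j a * dl k b + dl j b * dl k a)) := by
    refine Finset.sum_congr rfl fun i _ => Finset.sum_congr rfl fun j _ =>
      Finset.sum_congr rfl fun k _ => Finset.sum_congr rfl fun a _ =>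
      Finset.sum_congr rfl fun b _ => Finset.sum_congr rfl fun c _ => ?_
    rw [V6]
  rw [h1]
  simp only [mul_add, Finset.sum_add_distrib]
  have t1 : (∑ i, ∑ j, ∑ k, ∑ a, ∑ b, ∑ c,
      T i j k * T a b c * (dl i j * (dl k a * dl b c))) = XX := by
    have h : (∑ i, ∑ j, ∑ k, ∑ a, ∑ b, ∑ c,
        T i j k * T a b c * (dl i j * (dl k a * dl b c)))
        = ∑ i, ∑ k, ∑ b, T i i k * T k b b := by
      simp [dl, mul_ite, ite_mul, mul_zero, zero_mul, mul_one, one_mul,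
        Finset.sum_ite_eq, Finset.sum_ite_eq', Finset.mul_sum, Finset.sum_mul]
    rw [h]
    rw [show (∑ i, ∑ k, ∑ b, T i i k * T k b b : ℝ)
        = ∑ i, ∑ k, ∑ b, T i i k * T b b k from
      Finset.sum_congr rfl fun i _ => Finset.sum_congr rfl fun k _ =>
        Finset.sum_congr rfl fun b _ => by rw [hs k b b, ht b k b]]
    rw [hXX]
    exact Finset.sum_comm
  have t2 : (∑ i, ∑ j, ∑ k, ∑ a, ∑ b, ∑ c,
      T i j k * T a b c * (dl i j * (dl k b * dl a c))) = XX := by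
    have h : (∑ i, ∑ j, ∑ k, ∑ a, ∑ b, ∑ c,
        T i j k * T a b c * (dl i j * (dl k b * dl a c)))
        = ∑ i, ∑ k, ∑ a, T i i k * T a k a := by
      simp [dl, mul_ite, ite_mul, mul_zero, zero_mul, mul_one, one_mul,
        Finset.sum_ite_eq, Finset.sum_ite_eq', Finset.mul_sum, Finset.sum_mul]
    rw [h]
    rw [show (∑ i, ∑ k, ∑ a, T i i k * T a k a : ℝ)
        = ∑ i, ∑ k, ∑ a, T i i k * T a a k from
      Finset.sum_congr rfl fun i _ => Finset.sum_congr rfl fun k _ =>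
        Finset.sum_congr rfl fun a _ => by rw [ht a k a]]
    rw [hXX]
    exact Finset.sum_comm
  have t3 : (∑ i, ∑ j, ∑ k, ∑ a, ∑ b, ∑ c,
      T i j k * T a b c * (dl i j * (dl k c * dl a b))) = XX := by
    have h : (∑ i, ∑ j, ∑ k, ∑ a, ∑ b, ∑ c,
        T i j k * T a b c * (dl i j * (dl k c * dl a b)))
        = ∑ i, ∑ k, ∑ a, T i i k * T a a k := by
      simp [dl, mul_ite, ite_mul, mul_zero, zero_mul, mul_one, one_mul,
        Finset.sum_ite_eq, Finset.sum_ite_eq', Finset.mul_sum, Finset.sum_mul]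
    rw [h, hXX]
    exact Finset.sum_comm
  have t4 : (∑ i, ∑ j, ∑ k, ∑ a, ∑ b, ∑ c,
      T i j k * T a b c * (dl i k * (dl j a * dl b c))) = XX := by
    have h : (∑ i, ∑ j, ∑ k, ∑ a, ∑ b, ∑ c,
        T i j k * T a b c * (dl i k * (dl j a * dl b c)))
        = ∑ i, ∑ j, ∑ b, T i j i * T j b b := by
      simp [dl, mul_ite, ite_mul, mul_zero, zero_mul, mul_one, one_mul,
        Finset.sum_ite_eq, Finset.sum_ite_eq', Finset.mul_sum, Finset.sum_mul]
    rw [h]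
    rw [show (∑ i, ∑ j, ∑ b, T i j i * T j b b : ℝ)
        = ∑ i, ∑ j, ∑ b, T i i j * T b b j from
      Finset.sum_congr rfl fun i _ => Finset.sum_congr rfl fun j _ =>
        Finset.sum_congr rfl fun b _ => by rw [ht i j i, hs j b b, ht b j b]]
    rw [hXX]
    exact Finset.sum_comm
  have t5 : (∑ i, ∑ j, ∑ k, ∑ a, ∑ b, ∑ c,
      T i j k * T a b c * (dl i k * (dl j b * dl a c))) = XX := by
    have h : (∑ i, ∑ j, ∑ k, ∑ a, ∑ b, ∑ c,
        T i j k * T a b c * (dl i k * (dl j b * dl a c)))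
        = ∑ i, ∑ j, ∑ a, T i j i * T a j a := by
      simp [dl, mul_ite, ite_mul, mul_zero, zero_mul, mul_one, one_mul,
        Finset.sum_ite_eq, Finset.sum_ite_eq', Finset.mul_sum, Finset.sum_mul]
    rw [h]
    rw [show (∑ i, ∑ j, ∑ a, T i j i * T a j a : ℝ)
        = ∑ i, ∑ j, ∑ a, T i i j * T a a j from
      Finset.sum_congr rfl fun i _ => Finset.sum_congr rfl fun j _ =>
        Finset.sum_congr rfl fun a _ => by rw [ht i j i, ht a j a]]
    rw [hXX]
    exact Finset.sum_comm
  have t6 : (∑ i, ∑ j, ∑ k, ∑ a, ∑ b, ∑ c,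
      T i j k * T a b c * (dl i k * (dl j c * dl a b))) = XX := by
    have h : (∑ i, ∑ j, ∑ k, ∑ a, ∑ b, ∑ c,
        T i j k * T a b c * (dl i k * (dl j c * dl a b)))
        = ∑ i, ∑ j, ∑ a, T i j i * T a a j := by
      simp [dl, mul_ite, ite_mul, mul_zero, zero_mul, mul_one, one_mul,
        Finset.sum_ite_eq, Finset.sum_ite_eq', Finset.mul_sum, Finset.sum_mul]
    rw [h]
    rw [show (∑ i, ∑ j, ∑ a, T i j i * T a a j : ℝ)
        = ∑ i, ∑ j, ∑ a, T i i j * T a a j from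
      Finset.sum_congr rfl fun i _ => Finset.sum_congr rfl fun j _ =>
        Finset.sum_congr rfl fun a _ => by rw [ht i j i]]
    rw [hXX]
    exact Finset.sum_comm
  have t7 : (∑ i, ∑ j, ∑ k, ∑ a, ∑ b, ∑ c,
      T i j k * T a b c * (dl i a * (dl j k * dl b c))) = XX := by
    have h : (∑ i, ∑ j, ∑ k, ∑ a, ∑ b, ∑ c,
        T i j k * T a b c * (dl i a * (dl j k * dl b c)))
        = ∑ i, ∑ j, ∑ b, T i j j * T i b b := by
      simp [dl, mul_ite, ite_mul, mul_zero, zero_mul, mul_one, one_mul,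
        Finset.sum_ite_eq, Finset.sum_ite_eq', Finset.mul_sum, Finset.sum_mul]
    rw [h]
    rw [show (∑ i, ∑ j, ∑ b, T i j j * T i b b : ℝ)
        = ∑ i, ∑ j, ∑ b, T j j i * T b b i from
      Finset.sum_congr rfl fun i _ => Finset.sum_congr rfl fun j _ =>
        Finset.sum_congr rfl fun b _ => by
          rw [hs i j j, ht j i j, hs i b b, ht b i b]]
  have t8 : (∑ i, ∑ j, ∑ k, ∑ a, ∑ b, ∑ c,
      T i j k * T a b c * (dl i b * (dl j k * dl a c))) = XX := by
    have h : (∑ i, ∑ j, ∑ k, ∑ a, ∑ b, ∑ c,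
        T i j k * T a b c * (dl i b * (dl j k * dl a c)))
        = ∑ i, ∑ j, ∑ a, T i j j * T a i a := by
      simp [dl, mul_ite, ite_mul, mul_zero, zero_mul, mul_one, one_mul,
        Finset.sum_ite_eq, Finset.sum_ite_eq', Finset.mul_sum, Finset.sum_mul]
    rw [h]
    rw [show (∑ i, ∑ j, ∑ a, T i j j * T a i a : ℝ)
        = ∑ i, ∑ j, ∑ a, T j j i * T a a i from
      Finset.sum_congr rfl fun i _ => Finset.sum_congr rfl fun j _ =>
        Finset.sum_congr rfl fun a _ => by rw [hs i j j, ht j i j, ht a i a]]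
  have t9 : (∑ i, ∑ j, ∑ k, ∑ a, ∑ b, ∑ c,
      T i j k * T a b c * (dl i c * (dl j k * dl a b))) = XX := by
    have h : (∑ i, ∑ j, ∑ k, ∑ a, ∑ b, ∑ c,
        T i j k * T a b c * (dl i c * (dl j k * dl a b)))
        = ∑ i, ∑ j, ∑ a, T i j j * T a a i := by
      simp [dl, mul_ite, ite_mul, mul_zero, zero_mul, mul_one, one_mul,
        Finset.sum_ite_eq, Finset.sum_ite_eq', Finset.mul_sum, Finset.sum_mul]
    rw [h]
    rw [show (∑ i, ∑ j, ∑ a, T i j j * T a a i : ℝ)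
        = ∑ i, ∑ j, ∑ a, T j j i * T a a i from
      Finset.sum_congr rfl fun i _ => Finset.sum_congr rfl fun j _ =>
        Finset.sum_congr rfl fun a _ => by rw [hs i j j, ht j i j]]
  have t10 : (∑ i, ∑ j, ∑ k, ∑ a, ∑ b, ∑ c,
      T i j k * T a b c * (dl i a * (dl j b * dl k c))) = Y := by
    have h : (∑ i, ∑ j, ∑ k, ∑ a, ∑ b, ∑ c,
        T i j k * T a b c * (dl i a * (dl j b * dl k c)))
        = ∑ i, ∑ j, ∑ k, T i j k * T i j k := by
      simp [dl, mul_ite, ite_mul, mul_zero, zero_mul, mul_one, one_mul,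
        Finset.sum_ite_eq, Finset.sum_ite_eq', Finset.mul_sum, Finset.sum_mul]
    rw [h, hY]
  have t11 : (∑ i, ∑ j, ∑ k, ∑ a, ∑ b, ∑ c,
      T i j k * T a b c * (dl i a * (dl j c * dl k b))) = Y := by
    have h : (∑ i, ∑ j, ∑ k, ∑ a, ∑ b, ∑ c,
        T i j k * T a b c * (dl i a * (dl j c * dl k b)))
        = ∑ i, ∑ j, ∑ k, T i j k * T i k j := by
      simp [dl, mul_ite, ite_mul, mul_zero, zero_mul, mul_one, one_mul,
        Finset.sum_ite_eq, Finset.sum_ite_eq', Finset.mul_sum, Finset.sum_mul]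
    rw [h, hY]
    refine Finset.sum_congr rfl fun i _ => Finset.sum_congr rfl fun j _ =>
      Finset.sum_congr rfl fun k _ => by rw [(ht i j k).symm]
  have t12 : (∑ i, ∑ j, ∑ k, ∑ a, ∑ b, ∑ c,
      T i j k * T a b c * (dl i b * (dl j a * dl k c))) = Y := by
    have h : (∑ i, ∑ j, ∑ k, ∑ a, ∑ b, ∑ c,
        T i j k * T a b c * (dl i b * (dl j a * dl k c)))
        = ∑ i, ∑ j, ∑ k, T i j k * T j i k := by
      simp [dl, mul_ite, ite_mul, mul_zero, zero_mul, mul_one, one_mul,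
        Finset.sum_ite_eq, Finset.sum_ite_eq', Finset.mul_sum, Finset.sum_mul]
    rw [h, hY]
    refine Finset.sum_congr rfl fun i _ => Finset.sum_congr rfl fun j _ =>
      Finset.sum_congr rfl fun k _ => by rw [(hs i j k).symm]
  have t13 : (∑ i, ∑ j, ∑ k, ∑ a, ∑ b, ∑ c,
      T i j k * T a b c * (dl i b * (dl j c * dl k a))) = Y := by
    have h : (∑ i, ∑ j, ∑ k, ∑ a, ∑ b, ∑ c,
        T i j k * T a b c * (dl i b * (dl j c * dl k a)))
        = ∑ i, ∑ j, ∑ k, T i j k * T k i j := by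
      simp [dl, mul_ite, ite_mul, mul_zero, zero_mul, mul_one, one_mul,
        Finset.sum_ite_eq, Finset.sum_ite_eq', Finset.mul_sum, Finset.sum_mul]
    rw [h, hY]
    refine Finset.sum_congr rfl fun i _ => Finset.sum_congr rfl fun j _ =>
      Finset.sum_congr rfl fun k _ => by rw [(h4 i j k).symm]
  have t14 : (∑ i, ∑ j, ∑ k, ∑ a, ∑ b, ∑ c,
      T i j k * T a b c * (dl i c * (dl j a * dl k b))) = Y := by
    have h : (∑ i, ∑ j, ∑ k, ∑ a, ∑ b, ∑ c,
        T i j k * T a b c * (dl i c * (dl j a * dl k b)))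
        = ∑ i, ∑ j, ∑ k, T i j k * T j k i := by
      simp [dl, mul_ite, ite_mul, mul_zero, zero_mul, mul_one, one_mul,
        Finset.sum_ite_eq, Finset.sum_ite_eq', Finset.mul_sum, Finset.sum_mul]
    rw [h, hY]
    refine Finset.sum_congr rfl fun i _ => Finset.sum_congr rfl fun j _ =>
      Finset.sum_congr rfl fun k _ => by rw [(h3 i j k).symm]
  have t15 : (∑ i, ∑ j, ∑ k, ∑ a, ∑ b, ∑ c,
      T i j k * T a b c * (dl i c * (dl j b * dl k a))) = Y := by
    have h : (∑ i, ∑ j, ∑ k, ∑ a, ∑ b, ∑ c,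
        T i j k * T a b c * (dl i c * (dl j b * dl k a)))
        = ∑ i, ∑ j, ∑ k, T i j k * T k j i := by
      simp [dl, mul_ite, ite_mul, mul_zero, zero_mul, mul_one, one_mul,
        Finset.sum_ite_eq, Finset.sum_ite_eq', Finset.mul_sum, Finset.sum_mul]
    rw [h, hY]
    refine Finset.sum_congr rfl fun i _ => Finset.sum_congr rfl fun j _ =>
      Finset.sum_congr rfl fun k _ => by rw [(h5 i j k).symm]
  rw [t1, t2, t3, t4, t5, t6, t7, t8, t9, t10, t11, t12, t13, t14, t15]
  ring

lemma sum_ind {d : ℕ} (a : Fin d) : (∑ m, ind a m) = 1 := by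
  simp [ind, Finset.sum_ite_eq]

lemma prod_pow_ind {d : ℕ} (a : Fin d) (u : Fin d → ℝ) :
    (∏ m, (u m) ^ (ind a m)) = u a := by
  have h : ∀ m : Fin d, (u m) ^ (ind a m) = if a = m then u m else 1 := by
    intro m; by_cases h : a = m <;> simp [ind, h]
  simp only [h]
  simp

def E6 {d : ℕ} (i j k a b c : Fin d) (m : Fin d) : ℕ :=
  ind i m + ind j m + ind k m + ind a m + ind b m + ind c m

lemma mono7 {d : ℕ} (u : Fin d → ℝ) (i j k a b c n : Fin d) :
    (∏ m, (u m) ^ (E6 i j k a b c m + 2 * ind n m))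
      = u i * u j * u k * (u a * u b * u c) * (u n) ^ 2 := by
  simp only [E6, pow_add, pow_mul, Finset.prod_mul_distrib, prod_pow_ind]
  ring

lemma expand {d : ℕ} (T : Fin d → Fin d → Fin d → ℝ) (u : Fin d → ℝ) :
    (∑ i, ∑ j, ∑ k, T i j k * u i * u j * u k) ^ 2 * (∑ n, (u n) ^ 2)
      = ∑ n, ∑ i, ∑ j, ∑ k, ∑ a, ∑ b, ∑ c,
          T i j k * T a b c * ∏ m, (u m) ^ (E6 i j k a b c m + 2 * ind n m) := by
  simp only [mono7]
  rw [sq]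
  simp only [Finset.sum_mul, Finset.mul_sum]
  refine Finset.sum_congr rfl fun n _ => Finset.sum_congr rfl fun i _ =>
    Finset.sum_congr rfl fun j _ => Finset.sum_congr rfl fun k _ =>
    Finset.sum_congr rfl fun a _ =>
    Finset.sum_congr rfl fun b _ => Finset.sum_congr rfl fun c _ => ?_
  ring

/-- For a symmetric 3-tensor `T` on `ℝ^d` and `u ~ N(0, I_d)`,
`E[(Σ_{ijk} T_{ijk} u_i u_j u_k)² ‖u‖²]
  = 9(d+6) Σ_k (Σ_i T_{iik})² + 6(d+6) Σ_{ijk} T_{ijk}²`. -/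
theorem gaussian_cubic_form_second_moment (d : ℕ) (T : Fin d → Fin d → Fin d → ℝ)
    (hsymm : ∀ i j k : Fin d, T i j k = T j i k ∧ T i j k = T i k j) :
    ∫ u, (∑ i, ∑ j, ∑ k, T i j k * u i * u j * u k) ^ 2 * (∑ n, (u n) ^ 2)
        ∂(stdGaussian d)
      = 9 * (d + 6 : ℝ) * ∑ k, (∑ i, T i i k) ^ 2
        + 6 * (d + 6 : ℝ) * ∑ i, ∑ j, ∑ k, (T i j k) ^ 2 := by
  have base : ∀ n i j k a b c : Fin d, Integrable
      (fun u : Fin d → ℝ => T i j k * T a b c *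
        ∏ m, (u m) ^ (E6 i j k a b c m + 2 * ind n m)) (stdGaussian d) :=
    fun n i j k a b c => (integrable_monomial _).const_mul _
  have I6 : ∀ n i j k a b : Fin d, Integrable
      (fun u : Fin d → ℝ => ∑ c, T i j k * T a b c *
        ∏ m, (u m) ^ (E6 i j k a b c m + 2 * ind n m)) (stdGaussian d) :=
    fun n i j k a b => integrable_finset_sum _ (fun c _ => base n i j k a b c)
  have I5 : ∀ n i j k a : Fin d, Integrable
      (fun u : Fin d → ℝ => ∑ b, ∑ c, T i j k * T a b c *
        ∏ m, (u m) ^ (E6 i j k a b c m + 2 * ind n m)) (stdGaussian d) :=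
    fun n i j k a => integrable_finset_sum _ (fun b _ => I6 n i j k a b)
  have I4 : ∀ n i j k : Fin d, Integrable
      (fun u : Fin d → ℝ => ∑ a, ∑ b, ∑ c, T i j k * T a b c *
        ∏ m, (u m) ^ (E6 i j k a b c m + 2 * ind n m)) (stdGaussian d) :=
    fun n i j k => integrable_finset_sum _ (fun a _ => I5 n i j k a)
  have I3 : ∀ n i j : Fin d, Integrable
      (fun u : Fin d → ℝ => ∑ k, ∑ a, ∑ b, ∑ c, T i j k * T a b c *
        ∏ m, (u m) ^ (E6 i j k a b c m + 2 * ind n m)) (stdGaussian d) :=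
    fun n i j => integrable_finset_sum _ (fun k _ => I4 n i j k)
  have I2 : ∀ n i : Fin d, Integrable
      (fun u : Fin d → ℝ => ∑ j, ∑ k, ∑ a, ∑ b, ∑ c, T i j k * T a b c *
        ∏ m, (u m) ^ (E6 i j k a b c m + 2 * ind n m)) (stdGaussian d) :=
    fun n i => integrable_finset_sum _ (fun j _ => I3 n i j)
  have I1 : ∀ n : Fin d, Integrable
      (fun u : Fin d → ℝ => ∑ i, ∑ j, ∑ k, ∑ a, ∑ b, ∑ c, T i j k * T a b c *
        ∏ m, (u m) ^ (E6 i j k a b c m + 2 * ind n m)) (stdGaussian d) :=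
    fun n => integrable_finset_sum _ (fun i _ => I2 n i)
  have hval : ∀ n i j k a b c : Fin d,
      (∫ u, T i j k * T a b c * ∏ m, (u m) ^ (E6 i j k a b c m + 2 * ind n m)
        ∂(stdGaussian d))
      = T i j k * T a b c * ∏ m, Mm (E6 i j k a b c m + 2 * ind n m) := by
    intro n i j k a b c
    rw [integral_const_mul, integral_monomial]
  have hswap : (∫ u, ∑ n, ∑ i, ∑ j, ∑ k, ∑ a, ∑ b, ∑ c, T i j k * T a b c *
        ∏ m, (u m) ^ (E6 i j k a b c m + 2 * ind n m) ∂(stdGaussian d))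
      = ∑ n, ∑ i, ∑ j, ∑ k, ∑ a, ∑ b, ∑ c, T i j k * T a b c *
        ∏ m, Mm (E6 i j k a b c m + 2 * ind n m) := by
    rw [integral_finset_sum _ (fun n _ => I1 n)]
    refine Finset.sum_congr rfl fun n _ => ?_
    rw [integral_finset_sum _ (fun i _ => I2 n i)]
    refine Finset.sum_congr rfl fun i _ => ?_
    rw [integral_finset_sum _ (fun j _ => I3 n i j)]
    refine Finset.sum_congr rfl fun j _ => ?_
    rw [integral_finset_sum _ (fun k _ => I4 n i j k)]
    refine Finset.sum_congr rfl fun k _ => ?_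
    rw [integral_finset_sum _ (fun a _ => I5 n i j k a)]
    refine Finset.sum_congr rfl fun a _ => ?_
    rw [integral_finset_sum _ (fun b _ => I6 n i j k a b)]
    refine Finset.sum_congr rfl fun b _ => ?_
    rw [integral_finset_sum _ (fun c _ => base n i j k a b c)]
    exact Finset.sum_congr rfl fun c _ => hval n i j k a b c
  have hcomm : (∑ n, ∑ i, ∑ j, ∑ k, ∑ a, ∑ b, ∑ c, T i j k * T a b c *
        ∏ m, Mm (E6 i j k a b c m + 2 * ind n m))
      = ∑ i, ∑ j, ∑ k, ∑ a, ∑ b, ∑ c, ∑ n, T i j k * T a b c *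
        ∏ m, Mm (E6 i j k a b c m + 2 * ind n m) := by
    rw [Finset.sum_comm]
    refine Finset.sum_congr rfl fun i _ => ?_
    rw [Finset.sum_comm]
    refine Finset.sum_congr rfl fun j _ => ?_
    rw [Finset.sum_comm]
    refine Finset.sum_congr rfl fun k _ => ?_
    rw [Finset.sum_comm]
    refine Finset.sum_congr rfl fun a _ => ?_
    rw [Finset.sum_comm]
    refine Finset.sum_congr rfl fun b _ => ?_
    rw [Finset.sum_comm]
  have hn : ∀ i j k a b c : Fin d,
      (∑ n, T i j k * T a b c * ∏ m, Mm (E6 i j k a b c m + 2 * ind n m))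
      = ((6 : ℝ) + d) * (T i j k * T a b c * ∏ m, Mm (E6 i j k a b c m)) := by
    intro i j k a b c
    rw [← Finset.mul_sum, sumA]
    have h6 : ((∑ m, E6 i j k a b c m : ℕ) : ℝ) = 6 := by
      simp only [E6, Finset.sum_add_distrib, sum_ind]
      norm_num
    rw [h6]
    ring
  calc (∫ u, (∑ i, ∑ j, ∑ k, T i j k * u i * u j * u k) ^ 2 * (∑ n, (u n) ^ 2)
        ∂(stdGaussian d))
      = ∫ u, ∑ n, ∑ i, ∑ j, ∑ k, ∑ a, ∑ b, ∑ c, T i j k * T a b c *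
          ∏ m, (u m) ^ (E6 i j k a b c m + 2 * ind n m) ∂(stdGaussian d) := by
        simp only [expand]
    _ = ∑ n, ∑ i, ∑ j, ∑ k, ∑ a, ∑ b, ∑ c, T i j k * T a b c *
          ∏ m, Mm (E6 i j k a b c m + 2 * ind n m) := hswap
    _ = ∑ i, ∑ j, ∑ k, ∑ a, ∑ b, ∑ c, ∑ n, T i j k * T a b c *
          ∏ m, Mm (E6 i j k a b c m + 2 * ind n m) := hcomm
    _ = ∑ i, ∑ j, ∑ k, ∑ a, ∑ b, ∑ c, ((6 : ℝ) + d) * (T i j k * T a b c *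
          ∏ m, Mm (E6 i j k a b c m)) := by simp only [hn]
    _ = ((6 : ℝ) + d) * ∑ i, ∑ j, ∑ k, ∑ a, ∑ b, ∑ c, (T i j k * T a b c *
          ∏ m, Mm (E6 i j k a b c m)) := by simp only [← Finset.mul_sum]
    _ = ((6 : ℝ) + d) * (9 * (∑ k, (∑ i, T i i k) ^ 2)
          + 6 * ∑ i, ∑ j, ∑ k, (T i j k) ^ 2) := by
        rw [show (∑ i, ∑ j, ∑ k, ∑ a, ∑ b, ∑ c, (T i j k * T a b c *
            ∏ m, Mm (E6 i j k a b c m)) : ℝ)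
          = ∑ i, ∑ j, ∑ k, ∑ a, ∑ b, ∑ c, T i j k * T a b c *
            ∏ m, Mm (ind i m + ind j m + ind k m + ind a m + ind b m + ind c m) from by
          simp only [E6]]
        rw [contract T hsymm]
    _ = 9 * (d + 6 : ℝ) * ∑ k, (∑ i, T i i k) ^ 2
        + 6 * (d + 6 : ℝ) * ∑ i, ∑ j, ∑ k, (T i j k) ^ 2 := by ring
end

section
/- Let T be a symmetric 3-tensor on R^d and g in R^d a fixed vector, with u ~ N(0, I_d). Then E[(u^T g)(Σ_{i,j,k} T_{ijk} u_i u_j u_k) ||u||^2] = 3(d+4) Σ_k g_k (Σ_i T_{iik}). -/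
open MeasureTheory ProbabilityTheory

namespace CM
open Real Set
open scoped ENNReal NNReal

/-! ### Moments of the standard Gaussian -/

noncomputable def mom (n : ℕ) : ℝ := ∫ x, x ^ n ∂(gaussianReal 0 1)

noncomputable def J (n : ℕ) : ℝ := ∫ x, x ^ n * Real.exp (-x^2/2)

lemma gaussianReal_eq : gaussianReal 0 1
    = (volume : Measure ℝ).withDensity (fun x => ((Real.toNNReal (gaussianPDFReal 0 1 x)) : ℝ≥0∞)) := by
  rw [gaussianReal_of_var_ne_zero 0 one_ne_zero]; rfl

lemma pdf01 (x : ℝ) : gaussianPDFReal 0 1 x = (Real.sqrt (2*π))⁻¹ * Real.exp (-x^2/2) := by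
  rw [gaussianPDFReal]
  norm_num

lemma mom_eq (n : ℕ) : mom n = ∫ x, gaussianPDFReal 0 1 x * x ^ n := by
  rw [mom, gaussianReal_eq,
    integral_withDensity_eq_integral_smul ((measurable_gaussianPDFReal 0 1).real_toNNReal)]
  refine integral_congr_ae (.of_forall fun x => ?_)
  simp [NNReal.smul_def, Real.coe_toNNReal _ (gaussianPDFReal_nonneg 0 1 x)]

lemma mom_eq' (n : ℕ) : mom n = (Real.sqrt (2*π))⁻¹ * J n := by
  rw [mom_eq, J, ← integral_const_mul]
  refine integral_congr_ae (.of_forall fun x => ?_)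
  simp only []
  rw [pdf01]; ring

lemma J_odd {n : ℕ} (hn : Odd n) : J n = 0 := by
  have hmap : Measure.map (fun x : ℝ => -x) volume = volume := Measure.map_neg_eq_self volume
  have hemb : MeasurableEmbedding (fun x : ℝ => -x) := (Homeomorph.neg ℝ).measurableEmbedding
  have h1 : J n = ∫ x, (-x) ^ n * Real.exp (-(-x)^2/2) := by
    rw [J]
    conv_lhs => rw [← hmap]
    rw [hemb.integral_map]
  have h2 : ∀ x : ℝ, (-x) ^ n * Real.exp (-(-x)^2/2) = -(x ^ n * Real.exp (-x^2/2)) := by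
    intro x; rw [hn.neg_pow, neg_sq]; ring
  simp_rw [h2, integral_neg] at h1
  have : J n = - J n := h1
  linarith

lemma J_Ioi (m : ℕ) : ∫ x in Ioi (0:ℝ), x ^ m * Real.exp (-x ^ 2 / 2)
    = (1/2:ℝ) ^ (-((m:ℝ)+1)/2) * (1/2) * Real.Gamma (((m:ℝ)+1)/2) := by
  have h := integral_rpow_mul_exp_neg_mul_rpow (p := 2) (q := (m:ℝ)) (b := 1/2) two_pos
    (lt_of_lt_of_le neg_one_lt_zero (Nat.cast_nonneg m)) (by norm_num)
  rw [← h]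
  refine setIntegral_congr_fun measurableSet_Ioi fun x hx => ?_
  rw [show x ^ ((m:ℝ)) = x ^ m from Real.rpow_natCast x m,
    show x ^ ((2:ℝ)) = x ^ 2 by rw [show (2:ℝ) = ((2:ℕ):ℝ) by norm_num, Real.rpow_natCast]]
  congr 1
  ring

lemma J_even {m : ℕ} (hm : Even m) : J m
    = 2 * ((1/2:ℝ) ^ (-((m:ℝ)+1)/2) * (1/2) * Real.Gamma (((m:ℝ)+1)/2)) := by
  rw [← J_Ioi, ← integral_comp_abs (f := fun x => x ^ m * Real.exp (-x^2/2)), J]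
  refine integral_congr_ae (.of_forall fun x => ?_)
  simp only [hm.pow_abs, sq_abs]

lemma J_step {m : ℕ} (hm : Even m) : J (m + 2) = (m + 1) * J m := by
  have h2 : Even (m + 2) := by rcases hm with ⟨r, hr⟩; exact ⟨r+1, by omega⟩
  rw [J_even hm, J_even h2]
  have hcast : ((m + 2 : ℕ) : ℝ) = (m : ℝ) + 2 := by push_cast; ring
  rw [hcast]
  have hr : ((m:ℝ)+1)/2 ≠ 0 := by positivity
  have hG : Real.Gamma (((m:ℝ)+2+1)/2) = ((m:ℝ)+1)/2 * Real.Gamma (((m:ℝ)+1)/2) := by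
    rw [show ((m:ℝ)+2+1)/2 = ((m:ℝ)+1)/2 + 1 by ring, Real.Gamma_add_one hr]
  have hpow : (1/2:ℝ) ^ (-((m:ℝ)+2+1)/2) = 2 * (1/2:ℝ) ^ (-((m:ℝ)+1)/2) := by
    rw [show (-((m:ℝ)+2+1)/2) = (-((m:ℝ)+1)/2) + (-1) by ring,
      Real.rpow_add (by norm_num : (0:ℝ) < 1/2), Real.rpow_neg_one]
    norm_num
    ring
  rw [hG, hpow]
  ring

lemma mom_zero : mom 0 = 1 := by simp [mom]

lemma mom_odd {n : ℕ} (hn : Odd n) : mom n = 0 := by rw [mom_eq', J_odd hn, mul_zero]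

lemma mom_step {m : ℕ} (hm : Even m) : mom (m + 2) = (m + 1) * mom m := by
  rw [mom_eq', mom_eq', J_step hm]; ring

lemma mom_two : mom 2 = 1 := by
  have := mom_step (m := 0) Even.zero; rw [mom_zero] at this; norm_num at this; exact this

lemma mom_four : mom 4 = 3 := by
  have := mom_step (m := 2) (by decide); rw [mom_two] at this; norm_num at this; exact this

lemma mom_six : mom 6 = 15 := by
  have := mom_step (m := 4) (by decide); rw [mom_four] at this; norm_num at this; exact this

lemma integrable_pow_gauss (n : ℕ) :
    Integrable (fun x : ℝ => x ^ n) (gaussianReal 0 1) := by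
  rw [gaussianReal_of_var_ne_zero 0 one_ne_zero]
  have hd : (gaussianPDF 0 1) = fun x => ((Real.toNNReal (gaussianPDFReal 0 1 x)) : ℝ≥0∞) := rfl
  rw [hd, integrable_withDensity_iff_integrable_smul
    ((measurable_gaussianPDFReal 0 1).real_toNNReal)]
  have key : Integrable (fun x : ℝ => x ^ ((n:ℝ)) * Real.exp (-(1/2) * x ^ 2)) volume :=
    integrable_rpow_mul_exp_neg_mul_sq (by norm_num)
      (lt_of_lt_of_le neg_one_lt_zero (Nat.cast_nonneg n))
  have key2 : Integrable (fun x : ℝ => (Real.sqrt (2*π))⁻¹ * (x ^ n * Real.exp (-(1/2) * x ^ 2))) volume := by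
    simp_rw [← Real.rpow_natCast _ n]
    exact key.const_mul _
  refine key2.congr (.of_forall fun x => ?_)
  simp only []
  rw [NNReal.smul_def, Real.coe_toNNReal _ (gaussianPDFReal_nonneg 0 1 x), gaussianPDFReal]
  norm_num
  ring_nf

/-! ### Product integrals over `Measure.pi` -/

variable {μ : Measure ℝ} [IsProbabilityMeasure μ]

lemma integral_pi_prod : ∀ {n : ℕ} (f : Fin n → ℝ → ℝ),
    ∫ u, ∏ i, f i (u i) ∂(Measure.pi fun _ : Fin n => μ) = ∏ i, ∫ x, f i x ∂μ := by
  intro n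
  induction n with
  | zero =>
      intro f
      simp only [Finset.univ_eq_empty, Finset.prod_empty, integral_const, smul_eq_mul, mul_one]
      simp [Measure.pi_empty_univ]
  | succ n ih =>
      intro f
      calc
        ∫ u, ∏ i, f i (u i) ∂(Measure.pi fun _ : Fin (n+1) => μ)
            = ∫ p : ℝ × (Fin n → ℝ), f 0 p.1 * ∏ i : Fin n, f i.succ (p.2 i)
              ∂(μ.prod (Measure.pi fun _ : Fin n => μ)) := by
          rw [← ((measurePreserving_piFinSuccAbove (fun _ : Fin (n+1) => μ) 0).symm).integral_comp']
          simp only [MeasurableEquiv.piFinSuccAbove_symm_apply, Fin.insertNthEquiv,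
            Fin.prod_univ_succ, Fin.insertNth_zero, Equiv.coe_fn_mk, Fin.cons_succ,
            Fin.zero_succAbove, cast_eq, Fin.cons_zero, Function.comp_def]
        _ = (∫ x, f 0 x ∂μ) * ∏ i : Fin n, ∫ x, f i.succ x ∂μ := by
          rw [← ih fun i => f i.succ, ← integral_prod_mul]
        _ = ∏ i, ∫ x, f i x ∂μ := by rw [Fin.prod_univ_succ]

lemma integrable_pi_prod : ∀ {n : ℕ} (f : Fin n → ℝ → ℝ), (∀ i, Integrable (f i) μ) →
    Integrable (fun u => ∏ i, f i (u i)) (Measure.pi fun _ : Fin n => μ) := by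
  intro n
  induction n with
  | zero =>
      intro f _
      simp only [Finset.univ_eq_empty, Finset.prod_empty]
      exact integrable_const _
  | succ n ih =>
      intro f hf
      have h := (measurePreserving_piFinSuccAbove (fun _ : Fin (n+1) => μ) 0).symm
      rw [← h.integrable_comp_emb (MeasurableEquiv.measurableEmbedding _)]
      have hprod : Integrable (fun p : ℝ × (Fin n → ℝ) => f 0 p.1 * ∏ i : Fin n, f i.succ (p.2 i))
          (μ.prod (Measure.pi fun _ : Fin n => μ)) :=
        (hf 0).mul_prod (ih _ fun i => hf i.succ)
      refine hprod.congr (.of_forall fun p => ?_)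
      simp only [Function.comp_def, MeasurableEquiv.piFinSuccAbove_symm_apply, Fin.insertNthEquiv,
        Fin.prod_univ_succ, Fin.insertNth_zero, Equiv.coe_fn_mk, Fin.cons_succ,
        Fin.zero_succAbove, cast_eq, Fin.cons_zero]

/-! ### Index counting -/

variable {d : ℕ}

def ε (a m : Fin d) : ℕ := if m = a then 1 else 0

lemma prod_pow_eps (u : Fin d → ℝ) (a : Fin d) : ∏ m, u m ^ ε a m = u a := by
  simp [ε, pow_ite, Finset.prod_ite_eq']

def cnt (a b c e n : Fin d) (m : Fin d) : ℕ :=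
  ε a m + ε b m + ε c m + ε e m + ε n m + ε n m

lemma monomial (u : Fin d → ℝ) (a b c e n : Fin d) :
    ∏ m, u m ^ cnt a b c e n m = u a * u b * u c * u e * u n * u n := by
  simp only [cnt, pow_add, Finset.prod_mul_distrib, prod_pow_eps]

noncomputable def P (a b c e n : Fin d) : ℝ := ∏ m, mom (cnt a b c e n m)

lemma prod_mom_support (e : Fin d → ℕ) (s : Finset (Fin d)) (h : ∀ m ∉ s, e m = 0) :
    ∏ m, mom (e m) = ∏ m ∈ s, mom (e m) :=
  (Finset.prod_subset s.subset_univ fun x _ hx => by rw [h x hx, mom_zero]).symm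

lemma P_zero {a b c e : Fin d} (x : Fin d) (hodd : Odd (ε a x + ε b x + ε c x + ε e x))
    (n : Fin d) : P a b c e n = 0 := by
  refine Finset.prod_eq_zero (Finset.mem_univ x) (mom_odd ?_)
  obtain ⟨t, ht⟩ := hodd
  exact ⟨t + ε n x, by simp only [cnt]; omega⟩

lemma sum_pair_core {x y : Fin d} (hxy : x ≠ y) (e : Fin d → Fin d → ℕ)
    (he : ∀ n m, e n m = ε x m + ε x m + ε y m + ε y m + ε n m + ε n m) :
    ∑ n, ∏ m, mom (e n m) = (d : ℝ) + 4 := by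
  have hF : ∀ n, (∏ m, mom (e n m)) = if n = x then 3 else if n = y then 3 else 1 := by
    intro n
    by_cases hnx : n = x
    · subst hnx
      rw [if_pos rfl, prod_mom_support _ {n, y}
          (by intro m hm; simp only [Finset.mem_insert, Finset.mem_singleton, not_or] at hm
              simp [he, ε, hm.1, hm.2])]
      rw [Finset.prod_pair hxy]
      simp [he, ε, hxy, Ne.symm hxy, mom_two, mom_four]
    · by_cases hny : n = y
      · subst hny
        rw [if_neg hnx, if_pos rfl, prod_mom_support _ {x, n}
            (by intro m hm; simp only [Finset.mem_insert, Finset.mem_singleton, not_or] at hm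
                simp [he, ε, hm.1, hm.2])]
        rw [Finset.prod_pair hxy]
        simp [he, ε, hxy, Ne.symm hxy, mom_two, mom_four]
      · rw [if_neg hnx, if_neg hny, prod_mom_support _ {x, y, n}
            (by intro m hm; simp only [Finset.mem_insert, Finset.mem_singleton, not_or] at hm
                simp [he, ε, hm.1, hm.2.1, hm.2.2])]
        rw [Finset.prod_insert (by simp [hxy, hnx, Ne.symm hnx]),
          Finset.prod_insert (by simp [hny, Ne.symm hny]), Finset.prod_singleton]
        simp [he, ε, hxy, Ne.symm hxy, hnx, hny, Ne.symm hnx, Ne.symm hny, mom_two]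
  calc ∑ n, ∏ m, mom (e n m)
      = ∑ n : Fin d, ((1:ℝ) + (if n = x then 2 else 0) + (if n = y then 2 else 0)) := by
        refine Finset.sum_congr rfl fun n _ => ?_
        rw [hF n]; split_ifs with h1 h2 <;>
          first | (exact absurd (h1.symm.trans h2) hxy) | norm_num
    _ = (d : ℝ) + 4 := by
        rw [Finset.sum_add_distrib, Finset.sum_add_distrib, Finset.sum_const,
          Finset.sum_ite_eq' Finset.univ x (fun _ => (2:ℝ)),
          Finset.sum_ite_eq' Finset.univ y (fun _ => (2:ℝ))]
        simp; ring

lemma sum_quad_core (x : Fin d) (e : Fin d → Fin d → ℕ)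
    (he : ∀ n m, e n m = ε x m + ε x m + ε x m + ε x m + ε n m + ε n m) :
    ∑ n, ∏ m, mom (e n m) = 3 * ((d : ℝ) + 4) := by
  have hF : ∀ n, (∏ m, mom (e n m)) = if n = x then 15 else 3 := by
    intro n
    by_cases hnx : n = x
    · subst hnx
      rw [if_pos rfl, prod_mom_support _ {n}
          (by intro m hm; simp only [Finset.mem_singleton] at hm; simp [he, ε, hm])]
      rw [Finset.prod_singleton]
      simp [he, ε, mom_six]
    · rw [if_neg hnx, prod_mom_support _ {x, n}
          (by intro m hm; simp only [Finset.mem_insert, Finset.mem_singleton, not_or] at hm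
              simp [he, ε, hm.1, hm.2])]
      rw [Finset.prod_pair (Ne.symm hnx)]
      simp [he, ε, hnx, Ne.symm hnx, mom_two, mom_four]
  calc ∑ n, ∏ m, mom (e n m)
      = ∑ n : Fin d, ((3:ℝ) + (if n = x then 12 else 0)) := by
        refine Finset.sum_congr rfl fun n _ => ?_
        rw [hF n]; split_ifs <;> norm_num
    _ = 3 * ((d : ℝ) + 4) := by
        rw [Finset.sum_add_distrib, Finset.sum_const,
          Finset.sum_ite_eq' Finset.univ x (fun _ => (12:ℝ))]
        simp; ring

def δ (a b : Fin d) : ℝ := if a = b then 1 else 0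

lemma K (a b c e : Fin d) :
    ∑ n, P a b c e n
      = ((d : ℝ) + 4) * (δ a b * δ c e + δ a c * δ b e + δ a e * δ b c) := by
  by_cases hab : a = b
  · subst hab
    by_cases hce : c = e
    · subst hce
      by_cases hac : a = c
      · subst hac
        simp only [P]
        rw [sum_quad_core a (fun n m => cnt a a a a n m) (fun n m => rfl)]
        simp [δ]; ring
      · simp only [P]
        rw [sum_pair_core hac (fun n m => cnt a a c c n m) (fun n m => rfl)]
        simp [δ, hac]
    · rw [Finset.sum_eq_zero fun n _ => P_zero e ?_ n]
      · simp only [δ, ε]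
        split_ifs <;> first | (exfalso; grind) | norm_num
      · simp only [ε, if_neg (Ne.symm hce), if_pos rfl]
        split_ifs <;> decide
  · by_cases hce : c = e
    · subst hce
      rw [Finset.sum_eq_zero fun n _ => P_zero a ?_ n]
      · simp only [δ, ε]
        split_ifs <;> first | (exfalso; grind) | norm_num
      · simp only [ε, if_neg (fun h : a = b => hab h), if_pos rfl]
        split_ifs <;> decide
    · by_cases hac : a = c
      · subst hac
        by_cases hbe : b = e
        · subst hbe
          simp only [P]
          rw [sum_pair_core hab (fun n m => cnt a b a b n m)
            (fun n m => by simp only [cnt]; ring)]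
          simp [δ, hab]
        · rw [Finset.sum_eq_zero fun n _ => P_zero b ?_ n]
          · simp only [δ, ε]
            split_ifs <;> first | (exfalso; grind) | norm_num
          · simp only [ε, if_pos rfl, if_neg (Ne.symm hab)]
            split_ifs <;> decide
      · by_cases hae : a = e
        · subst hae
          by_cases hbc : b = c
          · subst hbc
            simp only [P]
            rw [sum_pair_core hab (fun n m => cnt a b b a n m)
              (fun n m => by simp only [cnt]; ring)]
            simp [δ, hab]
          · rw [Finset.sum_eq_zero fun n _ => P_zero b ?_ n]
            · simp only [δ, ε]
              split_ifs <;> first | (exfalso; grind) | norm_num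
            · simp only [ε, if_pos rfl, if_neg (Ne.symm hab)]
              split_ifs <;> decide
        · rw [Finset.sum_eq_zero fun n _ => P_zero a ?_ n]
          · simp only [δ, ε]
            split_ifs <;> first | (exfalso; grind) | norm_num
          · simp only [ε, if_pos rfl, if_neg (fun h : a = b => hab h)]
            split_ifs <;> decide

lemma final_alg (T : Fin d → Fin d → Fin d → ℝ) (g : Fin d → ℝ)
    (hsymm : ∀ i j k : Fin d, T i j k = T j i k ∧ T i j k = T i k j) :
    ∑ l, ∑ i, ∑ j, ∑ k, (g l * T i j k) *
        (((d : ℝ) + 4) * (δ l i * δ j k + δ l j * δ i k + δ l k * δ i j))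
      = 3 * ((d : ℝ) + 4) * ∑ k, g k * (∑ i, T i i k) := by
  have hT1 : ∀ i j k : Fin d, T i j k = T j i k := fun i j k => (hsymm i j k).1
  have hT2 : ∀ i j k : Fin d, T i j k = T i k j := fun i j k => (hsymm i j k).2
  simp only [δ, mul_add, Finset.sum_add_distrib, mul_ite, ite_mul, mul_zero, zero_mul,
    mul_one, one_mul, Finset.sum_ite_irrel, Finset.sum_ite_eq, Finset.sum_ite_eq',
    Finset.mem_univ, if_true, Finset.sum_const_zero, add_zero, zero_add]
  have e1 : ∀ x y : Fin d, T x y y = T y y x := fun x y => by rw [hT1, hT2]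
  have e2 : ∀ x y : Fin d, T y x y = T y y x := fun x y => hT2 y x y
  have h1 : ∀ c : ℝ, (∑ x : Fin d, ∑ y : Fin d, g x * T x y y * c)
      = ∑ x : Fin d, ∑ y : Fin d, g x * T y y x * c := fun c =>
    Finset.sum_congr rfl fun x _ => Finset.sum_congr rfl fun y _ => by rw [e1]
  have h2 : ∀ c : ℝ, (∑ x : Fin d, ∑ y : Fin d, g x * T y x y * c)
      = ∑ x : Fin d, ∑ y : Fin d, g x * T y y x * c := fun c =>
    Finset.sum_congr rfl fun x _ => Finset.sum_congr rfl fun y _ => by rw [e2]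
  rw [h1 ((d : ℝ)), h1 4, h2 ((d : ℝ)), h2 4]
  have hR : (∑ k, g k * (∑ i, T i i k)) = ∑ x : Fin d, ∑ y : Fin d, g x * T y y x :=
    Finset.sum_congr rfl fun k _ => Finset.mul_sum _ _ _
  rw [hR]
  simp_rw [← Finset.sum_mul]
  ring

lemma sum5_reorder (F : Fin d → Fin d → Fin d → Fin d → Fin d → ℝ) :
    ∑ a, ∑ b, ∑ c, ∑ e, ∑ f, F a b c e f = ∑ b, ∑ c, ∑ e, ∑ f, ∑ a, F a b c e f := by
  rw [Finset.sum_comm]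
  refine Finset.sum_congr rfl fun b _ => ?_
  rw [Finset.sum_comm]
  refine Finset.sum_congr rfl fun c _ => ?_
  rw [Finset.sum_comm]
  refine Finset.sum_congr rfl fun e _ => ?_
  rw [Finset.sum_comm]

lemma sum4_reorder (F : Fin d → Fin d → Fin d → Fin d → ℝ) :
    ∑ a, ∑ b, ∑ c, ∑ e, F a b c e = ∑ b, ∑ c, ∑ e, ∑ a, F a b c e := by
  rw [Finset.sum_comm]
  refine Finset.sum_congr rfl fun b _ => ?_
  rw [Finset.sum_comm]
  refine Finset.sum_congr rfl fun c _ => ?_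
  rw [Finset.sum_comm]

end CM

/-- For a symmetric 3-tensor `T` on `ℝ^d`, a fixed vector `g`, and `u ~ N(0, I_d)`,
`E[(uᵀg)(Σ_{ijk} T_{ijk} u_i u_j u_k) ‖u‖²] = 3(d+4) Σ_k g_k (Σ_i T_{iik})`. -/
theorem gaussian_cross_moment (d : ℕ) (T : Fin d → Fin d → Fin d → ℝ) (g : Fin d → ℝ)
    (hsymm : ∀ i j k : Fin d, T i j k = T j i k ∧ T i j k = T i k j) :
    ∫ u, (∑ i, u i * g i) * (∑ i, ∑ j, ∑ k, T i j k * u i * u j * u k)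
          * (∑ n, (u n) ^ 2) ∂(stdGaussian d)
      = 3 * (d + 4 : ℝ) * ∑ k, g k * (∑ i, T i i k) := by
  classical
  have hexp : ∀ u : Fin d → ℝ,
      (∑ i, u i * g i) * (∑ i, ∑ j, ∑ k, T i j k * u i * u j * u k) * (∑ n, (u n) ^ 2)
        = ∑ nn, ∑ i, ∑ j, ∑ k, ∑ l, (g l * T i j k) * ∏ m, u m ^ CM.cnt l i j k nn m := by
    intro u
    simp only [Finset.sum_mul, Finset.mul_sum]
    refine Finset.sum_congr rfl fun nn _ => Finset.sum_congr rfl fun i _ =>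
      Finset.sum_congr rfl fun j _ => Finset.sum_congr rfl fun k _ =>
      Finset.sum_congr rfl fun l _ => ?_
    rw [CM.monomial]
    ring
  have hint : ∀ a b c e n : Fin d,
      Integrable (fun u : Fin d → ℝ => ∏ m, u m ^ CM.cnt a b c e n m) (stdGaussian d) := by
    intro a b c e n
    exact CM.integrable_pi_prod (fun m x => x ^ CM.cnt a b c e n m)
      (fun m => CM.integrable_pow_gauss _)
  have I5 : ∀ nn i j k l : Fin d,
      Integrable (fun u : Fin d → ℝ => (g l * T i j k) * ∏ m, u m ^ CM.cnt l i j k nn m)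
        (stdGaussian d) := fun nn i j k l => (hint l i j k nn).const_mul _
  have I4 : ∀ nn i j k : Fin d,
      Integrable (fun u : Fin d → ℝ => ∑ l, (g l * T i j k) * ∏ m, u m ^ CM.cnt l i j k nn m)
        (stdGaussian d) := fun nn i j k => integrable_finset_sum _ fun l _ => I5 nn i j k l
  have I3 : ∀ nn i j : Fin d,
      Integrable (fun u : Fin d → ℝ =>
          ∑ k, ∑ l, (g l * T i j k) * ∏ m, u m ^ CM.cnt l i j k nn m)
        (stdGaussian d) := fun nn i j => integrable_finset_sum _ fun k _ => I4 nn i j k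
  have I2 : ∀ nn i : Fin d,
      Integrable (fun u : Fin d → ℝ =>
          ∑ j, ∑ k, ∑ l, (g l * T i j k) * ∏ m, u m ^ CM.cnt l i j k nn m)
        (stdGaussian d) := fun nn i => integrable_finset_sum _ fun j _ => I3 nn i j
  have I1 : ∀ nn : Fin d,
      Integrable (fun u : Fin d → ℝ =>
          ∑ i, ∑ j, ∑ k, ∑ l, (g l * T i j k) * ∏ m, u m ^ CM.cnt l i j k nn m)
        (stdGaussian d) := fun nn => integrable_finset_sum _ fun i _ => I2 nn i
  calc
    ∫ u, (∑ i, u i * g i) * (∑ i, ∑ j, ∑ k, T i j k * u i * u j * u k)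
        * (∑ n, (u n) ^ 2) ∂(stdGaussian d)
        = ∫ u, ∑ nn, ∑ i, ∑ j, ∑ k, ∑ l,
            (g l * T i j k) * ∏ m, u m ^ CM.cnt l i j k nn m ∂(stdGaussian d) :=
      integral_congr_ae (.of_forall fun u => hexp u)
    _ = ∑ nn, ∑ i, ∑ j, ∑ k, ∑ l, (g l * T i j k) * CM.P l i j k nn := by
      rw [integral_finset_sum _ fun nn _ => I1 nn]
      refine Finset.sum_congr rfl fun nn _ => ?_
      rw [integral_finset_sum _ fun i _ => I2 nn i]
      refine Finset.sum_congr rfl fun i _ => ?_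
      rw [integral_finset_sum _ fun j _ => I3 nn i j]
      refine Finset.sum_congr rfl fun j _ => ?_
      rw [integral_finset_sum _ fun k _ => I4 nn i j k]
      refine Finset.sum_congr rfl fun k _ => ?_
      rw [integral_finset_sum _ fun l _ => I5 nn i j k l]
      refine Finset.sum_congr rfl fun l _ => ?_
      rw [integral_const_mul]
      congr 1
      rw [_root_.stdGaussian, CM.integral_pi_prod (fun m x => x ^ CM.cnt l i j k nn m)]
      rfl
    _ = ∑ i, ∑ j, ∑ k, ∑ l, ∑ nn, (g l * T i j k) * CM.P l i j k nn :=
      CM.sum5_reorder _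
    _ = ∑ i, ∑ j, ∑ k, ∑ l, (g l * T i j k) *
          (((d : ℝ) + 4) * (CM.δ l i * CM.δ j k + CM.δ l j * CM.δ i k + CM.δ l k * CM.δ i j)) := by
      refine Finset.sum_congr rfl fun i _ => Finset.sum_congr rfl fun j _ =>
        Finset.sum_congr rfl fun k _ => Finset.sum_congr rfl fun l _ => ?_
      rw [← Finset.mul_sum, CM.K]
    _ = ∑ l, ∑ i, ∑ j, ∑ k, (g l * T i j k) *
          (((d : ℝ) + 4) * (CM.δ l i * CM.δ j k + CM.δ l j * CM.δ i k + CM.δ l k * CM.δ i j)) :=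
      (CM.sum4_reorder _).symm
    _ = 3 * ((d : ℝ) + 4) * ∑ k, g k * (∑ i, T i i k) := CM.final_alg T g hsymm
end

section
/- Suppose f : R^d → R is third-order smooth with constant L_3 (the third-derivative tensor is L_3-Lipschitz in the induced tensor norm). Then the map x ↦ ∇tr(∇^2 f(x)) is Lipschitz with constant √2 d^{3/2} L_3; consequently ||∇tr(∇^2 f(y)) − ∇tr(∇^2 f(z))||^2 ≤ 2 d^3 L_3^2 ||y − z||^2 for all y, z. -/
/-- Trace of the Hessian of `f` at `x`, `Σ_i ∂²f/∂x_i²`. -/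
noncomputable def hessTrace {d : ℕ} (f : EuclideanSpace ℝ (Fin d) → ℝ)
    (x : EuclideanSpace ℝ (Fin d)) : ℝ :=
  ∑ i, iteratedFDeriv ℝ 2 f x ![EuclideanSpace.single i 1, EuclideanSpace.single i 1]

set_option linter.unusedSectionVars false
set_option maxHeartbeats 1000000

namespace HTaux

section multilinear
variable {E : Type*} [NormedAddCommGroup E] [NormedSpace ℝ E]

lemma upd0 (a b c x : E) : Function.update ![a,b,c] (0 : Fin 3) x = ![x,b,c] := by
  funext i; fin_cases i <;> simp
lemma upd1 (a b c x : E) : Function.update ![a,b,c] (1 : Fin 3) x = ![a,x,c] := by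
  funext i; fin_cases i <;> simp
lemma upd2 (a b c x : E) : Function.update ![a,b,c] (2 : Fin 3) x = ![a,b,x] := by
  funext i; fin_cases i <;> simp

variable (T : ContinuousMultilinearMap ℝ (fun _ : Fin 3 => E) ℝ)

lemma add0 (a a' b c : E) : T ![a+a',b,c] = T ![a,b,c] + T ![a',b,c] := by
  have := T.map_update_add ![a,b,c] 0 a a'; rwa [upd0, upd0, upd0] at this
lemma add1 (a b b' c : E) : T ![a,b+b',c] = T ![a,b,c] + T ![a,b',c] := by
  have := T.map_update_add ![a,b,c] 1 b b'; rwa [upd1, upd1, upd1] at this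
lemma add2 (a b c c' : E) : T ![a,b,c+c'] = T ![a,b,c] + T ![a,b,c'] := by
  have := T.map_update_add ![a,b,c] 2 c c'; rwa [upd2, upd2, upd2] at this
lemma smul0 (t : ℝ) (a b c : E) : T ![t • a, b, c] = t * T ![a,b,c] := by
  have := T.map_update_smul ![a,b,c] 0 t a; rwa [upd0, upd0, smul_eq_mul] at this
lemma smul1 (t : ℝ) (a b c : E) : T ![a, t • b, c] = t * T ![a,b,c] := by
  have := T.map_update_smul ![a,b,c] 1 t b; rwa [upd1, upd1, smul_eq_mul] at this
lemma smul2 (t : ℝ) (a b c : E) : T ![a, b, t • c] = t * T ![a,b,c] := by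
  have := T.map_update_smul ![a,b,c] 2 t c; rwa [upd2, upd2, smul_eq_mul] at this

lemma neg0 (a b c : E) : T ![-a, b, c] = - T ![a,b,c] := by simpa using smul0 T (-1) a b c
lemma neg1 (a b c : E) : T ![a, -b, c] = - T ![a,b,c] := by simpa using smul1 T (-1) a b c
lemma neg2 (a b c : E) : T ![a, b, -c] = - T ![a,b,c] := by simpa using smul2 T (-1) a b c

lemma cube_smul (t : ℝ) (w : E) : T ![t • w, t • w, t • w] = t^3 * T ![w,w,w] := by
  rw [smul0, smul1, smul2]; ring

lemma cube_add (a b : E) : T ![a+b,a+b,a+b] =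
    T ![a,a,a] + T ![a,a,b] + T ![a,b,a] + T ![a,b,b]
      + T ![b,a,a] + T ![b,a,b] + T ![b,b,a] + T ![b,b,b] := by
  rw [add0, add1, add1, add2, add2, add2, add2]; ring

lemma cube_sub (a b : E) : T ![a-b,a-b,a-b] =
    T ![a,a,a] - T ![a,a,b] - T ![a,b,a] + T ![a,b,b]
      - T ![b,a,a] + T ![b,a,b] + T ![b,b,a] - T ![b,b,b] := by
  simp only [sub_eq_add_neg, cube_add, neg0, neg1, neg2]
  ring

lemma first_slot_sum {ι : Type*} (s : Finset ι) (t : ι → ℝ) (w : ι → E) (b c : E) :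
    T ![∑ k ∈ s, t k • w k, b, c] = ∑ k ∈ s, t k * T ![w k, b, c] := by
  have h1 : ∀ x : E, T ![x, b, c] = T.curryLeft x ![b, c] := fun _ => rfl
  rw [h1, map_sum]
  simp only [map_smul, ContinuousMultilinearMap.sum_apply, ContinuousMultilinearMap.smul_apply,
    smul_eq_mul]
  exact Finset.sum_congr rfl fun k _ => by rw [h1]

end multilinear

section calc1
variable {E : Type*} [NormedAddCommGroup E] [NormedSpace ℝ E] {f : E → ℝ}

lemma third_eq (hf : ContDiff ℝ 3 f) (x a b c : E) :
    iteratedFDeriv ℝ 3 f x ![a,b,c]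
      = fderiv ℝ (fun y => iteratedFDeriv ℝ 2 f y ![b,c]) x a := by
  have hI2 : ContDiff ℝ 1 (iteratedFDeriv ℝ 2 f) := hf.iteratedFDeriv_right (by norm_num)
  have h1 : HasFDerivAt (fun y => iteratedFDeriv ℝ 2 f y ![b,c])
      ((ContinuousMultilinearMap.apply ℝ (fun _ : Fin 2 => E) ℝ ![b,c]).comp
        (fderiv ℝ (iteratedFDeriv ℝ 2 f) x)) x :=
    (ContinuousMultilinearMap.apply ℝ (fun _ : Fin 2 => E) ℝ ![b,c]).hasFDerivAt.comp x
      ((hI2.differentiable (by norm_num) x).hasFDerivAt)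
  rw [h1.fderiv]
  rfl

lemma sym23 (hf : ContDiff ℝ 3 f) (x a b c : E) :
    iteratedFDeriv ℝ 3 f x ![a,b,c] = iteratedFDeriv ℝ 3 f x ![a,c,b] := by
  rw [third_eq hf, third_eq hf]
  have heq : (fun y => iteratedFDeriv ℝ 2 f y ![b,c])
      = (fun y => iteratedFDeriv ℝ 2 f y ![c,b]) := by
    funext w
    rw [iteratedFDeriv_two_apply, iteratedFDeriv_two_apply]
    have := (hf.contDiffAt.isSymmSndFDerivAt (by norm_num)).eq (x := w) b c
    simpa using this
  rw [heq]

lemma sym12 (hf : ContDiff ℝ 3 f) (x a b c : E) :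
    iteratedFDeriv ℝ 3 f x ![a,b,c] = iteratedFDeriv ℝ 3 f x ![b,a,c] := by
  set g : E → ℝ := fun y => fderiv ℝ f y c with hg_def
  have hdf : ContDiff ℝ 2 (fderiv ℝ f) := hf.fderiv_right (by norm_num)
  have hg : ContDiff ℝ 2 g := (ContinuousLinearMap.apply ℝ ℝ c).contDiff.comp hdf
  have step1 : ∀ (y b' : E), iteratedFDeriv ℝ 2 f y ![b', c] = fderiv ℝ g y b' := by
    intro y b'
    rw [iteratedFDeriv_two_apply]
    have h : HasFDerivAt g ((ContinuousLinearMap.apply ℝ ℝ c).comp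
        (fderiv ℝ (fderiv ℝ f) y)) y :=
      (ContinuousLinearMap.apply ℝ ℝ c).hasFDerivAt.comp y
        ((hdf.differentiable (by norm_num) y).hasFDerivAt)
    rw [h.fderiv]
    simp
  have step2 : ∀ a' b' : E,
      iteratedFDeriv ℝ 3 f x ![a',b',c] = fderiv ℝ (fderiv ℝ g) x a' b' := by
    intro a' b'
    rw [third_eq hf]
    have heq : (fun y => iteratedFDeriv ℝ 2 f y ![b',c]) = fun y => fderiv ℝ g y b' :=
      funext fun y => step1 y b'
    rw [heq]
    have h : HasFDerivAt (fun y => fderiv ℝ g y b')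
        ((ContinuousLinearMap.apply ℝ ℝ b').comp (fderiv ℝ (fderiv ℝ g) x)) x :=
      (ContinuousLinearMap.apply ℝ ℝ b').hasFDerivAt.comp x
        (((hg.fderiv_right (m := 1) (by norm_num)).differentiable (by norm_num) x).hasFDerivAt)
    rw [h.fderiv]
    simp
  rw [step2, step2]
  exact (hg.contDiffAt.isSymmSndFDerivAt (by norm_num)).eq a b

end calc1

variable {d : ℕ} {f : EuclideanSpace ℝ (Fin d) → ℝ}

lemma fderiv_hessTrace (hf : ContDiff ℝ 3 f) (x v : EuclideanSpace ℝ (Fin d)) :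
    fderiv ℝ (hessTrace f) x v
      = ∑ i, iteratedFDeriv ℝ 3 f x
          ![v, EuclideanSpace.single i 1, EuclideanSpace.single i 1] := by
  have hI2 : ContDiff ℝ 1 (iteratedFDeriv ℝ 2 f) := hf.iteratedFDeriv_right (by norm_num)
  have h : HasFDerivAt (hessTrace f)
      (∑ i, (ContinuousMultilinearMap.apply ℝ (fun _ : Fin 2 => EuclideanSpace ℝ (Fin d)) ℝ
          ![EuclideanSpace.single i 1, EuclideanSpace.single i 1]).comp
        (fderiv ℝ (iteratedFDeriv ℝ 2 f) x)) x := by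
    apply HasFDerivAt.fun_sum
    intro i _
    exact (ContinuousMultilinearMap.apply ℝ _ ℝ _).hasFDerivAt.comp x
      ((hI2.differentiable (by norm_num) x).hasFDerivAt)
  rw [h.fderiv, ContinuousLinearMap.sum_apply]
  rfl

end HTaux

/-- If `f` is three times continuously differentiable and third-order smooth with
constant `L₃` (the third-derivative tensor is `L₃`-Lipschitz in the induced tensor norm
`max_{‖w‖≤1} |∇³f(y)[w]³ − ∇³f(z)[w]³|`), then `x ↦ ∇tr(∇²f(x))` is Lipschitz with
constant `√2 d^{3/2} L₃`, and consequently the squared bound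
`‖∇tr(∇²f(y)) − ∇tr(∇²f(z))‖² ≤ 2 d³ L₃² ‖y − z‖²` holds. -/
theorem grad_hessTrace_lipschitz (d : ℕ) (f : EuclideanSpace ℝ (Fin d) → ℝ) (L3 : ℝ)
    (hf : ContDiff ℝ 3 f)
    (hL3 : ∀ y z : EuclideanSpace ℝ (Fin d), ∀ w : EuclideanSpace ℝ (Fin d), ‖w‖ ≤ 1 →
      |iteratedFDeriv ℝ 3 f y ![w, w, w] - iteratedFDeriv ℝ 3 f z ![w, w, w]|
        ≤ L3 * ‖y - z‖) :
    ∀ y z : EuclideanSpace ℝ (Fin d),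
      ‖fderiv ℝ (hessTrace f) y - fderiv ℝ (hessTrace f) z‖
          ≤ Real.sqrt 2 * (d : ℝ) ^ ((3 : ℝ) / 2) * L3 * ‖y - z‖ ∧
      ‖fderiv ℝ (hessTrace f) y - fderiv ℝ (hessTrace f) z‖ ^ 2
          ≤ 2 * (d : ℝ) ^ 3 * L3 ^ 2 * ‖y - z‖ ^ 2 := by
  intro y z
  have hΔapp : ∀ m, (iteratedFDeriv ℝ 3 f y - iteratedFDeriv ℝ 3 f z) m
      = iteratedFDeriv ℝ 3 f y m - iteratedFDeriv ℝ 3 f z m := fun m => rfl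
  set Δ : ContinuousMultilinearMap ℝ (fun _ : Fin 3 => EuclideanSpace ℝ (Fin d)) ℝ :=
    iteratedFDeriv ℝ 3 f y - iteratedFDeriv ℝ 3 f z with hΔdef
  set c : ℝ := L3 * ‖y - z‖ with hcdef
  have hc : 0 ≤ c := by
    have h := hL3 y z 0 (by simp)
    have h0 : ∀ x', iteratedFDeriv ℝ 3 f x' ![(0 : EuclideanSpace ℝ (Fin d)),0,0] = 0 :=
      fun x' => ContinuousMultilinearMap.map_coord_zero _ (0 : Fin 3) rfl
    rw [h0, h0] at h; simpa using h
  have hΔw : ∀ w : EuclideanSpace ℝ (Fin d), ‖w‖ ≤ 1 → |Δ ![w,w,w]| ≤ c := fun w hw => by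
    rw [hΔapp]; exact hL3 y z w hw
  have hsym12 : ∀ a b c' : EuclideanSpace ℝ (Fin d), Δ ![a,b,c'] = Δ ![b,a,c'] := by
    intro a b c'; rw [hΔapp, hΔapp, HTaux.sym12 hf y, HTaux.sym12 hf z]
  have hsym23 : ∀ a b c' : EuclideanSpace ℝ (Fin d), Δ ![a,b,c'] = Δ ![a,c',b] := by
    intro a b c'; rw [hΔapp, hΔapp, HTaux.sym23 hf y, HTaux.sym23 hf z]
  have hs2 : Real.sqrt 2 ^ 2 = 2 := Real.sq_sqrt (by norm_num)
  have hs0 : 0 < Real.sqrt 2 := Real.sqrt_pos.mpr (by norm_num)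
  have h1s : 1 ≤ Real.sqrt 2 := by nlinarith
  -- key entry-wise bound
  have hkey : ∀ k i : Fin d,
      |Δ ![EuclideanSpace.single k 1, EuclideanSpace.single i 1, EuclideanSpace.single i 1]|
        ≤ Real.sqrt 2 * c := by
    intro k i
    have hne : ∀ j : Fin d, ‖(EuclideanSpace.single j 1 : EuclideanSpace ℝ (Fin d))‖ = 1 := by
      intro j; rw [EuclideanSpace.norm_single]; norm_num
    by_cases hki : k = i
    · subst hki
      have := hΔw _ (le_of_eq (hne k))
      nlinarith [abs_nonneg (Δ ![(EuclideanSpace.single k 1 : EuclideanSpace ℝ (Fin d)),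
        EuclideanSpace.single k 1, EuclideanSpace.single k 1])]
    · set a : EuclideanSpace ℝ (Fin d) := EuclideanSpace.single k 1 with ha
      set b : EuclideanSpace ℝ (Fin d) := EuclideanSpace.single i 1 with hb
      have hinner : inner ℝ a b = (0:ℝ) := by
        rw [ha, hb, EuclideanSpace.inner_single_left]
        simp [EuclideanSpace.single_apply, hki]
      have hp : ‖a + b‖ = Real.sqrt 2 := by
        have hp2 : ‖a + b‖^2 = 2 := by
          rw [norm_add_sq_real, hinner, hne, hne]; ring
        rw [← Real.sqrt_sq (norm_nonneg (a+b)), hp2]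
      have hm : ‖a - b‖ = Real.sqrt 2 := by
        have hm2 : ‖a - b‖^2 = 2 := by
          rw [norm_sub_sq_real, hinner, hne, hne]; ring
        rw [← Real.sqrt_sq (norm_nonneg (a-b)), hm2]
      have hcube : ∀ u : EuclideanSpace ℝ (Fin d), ‖u‖ = Real.sqrt 2 →
          |Δ ![u,u,u]| ≤ Real.sqrt 2 ^ 3 * c := by
        intro u hu
        have hw : ‖(Real.sqrt 2)⁻¹ • u‖ ≤ 1 := by
          rw [norm_smul, hu, Real.norm_eq_abs, abs_of_pos (inv_pos.mpr hs0),
            inv_mul_cancel₀ hs0.ne']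
        have hcs := HTaux.cube_smul Δ (Real.sqrt 2) ((Real.sqrt 2)⁻¹ • u)
        rw [smul_inv_smul₀ hs0.ne'] at hcs
        rw [hcs, abs_mul, abs_of_nonneg (pow_nonneg hs0.le 3)]
        exact mul_le_mul_of_nonneg_left (hΔw _ hw) (pow_nonneg hs0.le 3)
      have hP := hcube (a+b) hp
      have hM := hcube (a-b) hm
      have hA := hΔw a (le_of_eq (hne k))
      have hsum : Δ ![a+b,a+b,a+b] + Δ ![a-b,a-b,a-b]
          = 2 * Δ ![a,a,a] + 6 * Δ ![a,b,b] := by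
        rw [HTaux.cube_add, HTaux.cube_sub]
        have e1 : Δ ![b,a,b] = Δ ![a,b,b] := hsym12 b a b
        have e2 : Δ ![b,b,a] = Δ ![a,b,b] := by rw [hsym23 b b a]; exact hsym12 b a b
        rw [e1, e2]; ring
      have hs3 : Real.sqrt 2 ^ 3 = 2 * Real.sqrt 2 := by
        have : Real.sqrt 2 ^ 3 = Real.sqrt 2 ^ 2 * Real.sqrt 2 := by ring
        rw [this, hs2]
      rw [hs3] at hP hM
      rw [abs_le] at hP hM hA ⊢
      have hprod : 0 ≤ c * (Real.sqrt 2 - 1) := mul_nonneg hc (by linarith)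
      constructor <;> nlinarith [hP.1, hP.2, hM.1, hM.2, hA.1, hA.2, hsum, hprod]
  -- operator bound pointwise
  have hDfull : ∀ v : EuclideanSpace ℝ (Fin d),
      ‖(fderiv ℝ (hessTrace f) y - fderiv ℝ (hessTrace f) z) v‖
        ≤ Real.sqrt 2 * Real.sqrt d ^ 3 * c * ‖v‖ := by
    intro v
    have hKv : (fderiv ℝ (hessTrace f) y - fderiv ℝ (hessTrace f) z) v
        = ∑ i, Δ ![v, EuclideanSpace.single i 1, EuclideanSpace.single i 1] := by
      rw [ContinuousLinearMap.sub_apply, HTaux.fderiv_hessTrace hf, HTaux.fderiv_hessTrace hf,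
        ← Finset.sum_sub_distrib]
      exact Finset.sum_congr rfl fun i _ => (hΔapp _).symm
    have hv : v = ∑ k, v k • (EuclideanSpace.single k 1 : EuclideanSpace ℝ (Fin d)) := by
      ext j
      rw [WithLp.ofLp_sum, Finset.sum_apply]
      simp [EuclideanSpace.single_apply]
    have hterm : ∀ i, Δ ![v, EuclideanSpace.single i 1, EuclideanSpace.single i 1]
        = ∑ k, v k * Δ ![EuclideanSpace.single k 1,
            EuclideanSpace.single i 1, EuclideanSpace.single i 1] := by
      intro i
      conv_lhs => rw [hv]
      exact HTaux.first_slot_sum Δ Finset.univ (fun k => v k)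
        (fun k => EuclideanSpace.single k 1) _ _
    have hCS : ∑ k, |v k| ≤ Real.sqrt d * ‖v‖ := by
      have h1 : (∑ k, |v k|)^2 ≤ (d:ℝ) * ∑ k, |v k|^2 := by
        have := sq_sum_le_card_mul_sum_sq (s := (Finset.univ : Finset (Fin d)))
          (f := fun k => |v k|)
        simpa using this
      have h2 : ∑ k, |v k|^2 = ‖v‖^2 := by
        rw [EuclideanSpace.norm_eq, Real.sq_sqrt (by positivity)]
        exact Finset.sum_congr rfl fun k _ => by rw [Real.norm_eq_abs]
      have h3 : ∑ k, |v k| ≤ Real.sqrt ((d:ℝ) * ‖v‖^2) := by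
        rw [← Real.sqrt_sq (Finset.sum_nonneg fun k _ => abs_nonneg _)]
        apply Real.sqrt_le_sqrt
        rw [← h2]; exact h1
      rwa [Real.sqrt_mul (Nat.cast_nonneg d), Real.sqrt_sq (norm_nonneg v)] at h3
    rw [hKv, Real.norm_eq_abs]
    calc |∑ i, Δ ![v, EuclideanSpace.single i 1, EuclideanSpace.single i 1]|
        ≤ ∑ i, |Δ ![v, EuclideanSpace.single i 1, EuclideanSpace.single i 1]| :=
          Finset.abs_sum_le_sum_abs _ _
      _ ≤ ∑ _i : Fin d, (∑ k, |v k|) * (Real.sqrt 2 * c) := by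
          apply Finset.sum_le_sum; intro i _
          rw [hterm i]
          calc |∑ k, v k * Δ ![EuclideanSpace.single k 1,
                EuclideanSpace.single i 1, EuclideanSpace.single i 1]|
              ≤ ∑ k, |v k * Δ ![EuclideanSpace.single k 1,
                EuclideanSpace.single i 1, EuclideanSpace.single i 1]| :=
                Finset.abs_sum_le_sum_abs _ _
            _ ≤ ∑ k, |v k| * (Real.sqrt 2 * c) := by
                apply Finset.sum_le_sum; intro k _
                rw [abs_mul]
                exact mul_le_mul_of_nonneg_left (hkey k i) (abs_nonneg _)
            _ = (∑ k, |v k|) * (Real.sqrt 2 * c) := by rw [Finset.sum_mul]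
      _ = (d:ℝ) * ((∑ k, |v k|) * (Real.sqrt 2 * c)) := by
          rw [Finset.sum_const, Finset.card_univ, Fintype.card_fin, nsmul_eq_mul]
      _ ≤ (d:ℝ) * ((Real.sqrt d * ‖v‖) * (Real.sqrt 2 * c)) := by
          apply mul_le_mul_of_nonneg_left _ (Nat.cast_nonneg d)
          exact mul_le_mul_of_nonneg_right hCS (mul_nonneg hs0.le hc)
      _ = Real.sqrt 2 * Real.sqrt d ^ 3 * c * ‖v‖ := by
          have hd : ((d:ℝ)) = Real.sqrt d * Real.sqrt d :=
            (Real.mul_self_sqrt (Nat.cast_nonneg d)).symm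
          linear_combination (Real.sqrt d * ‖v‖ * Real.sqrt 2 * c) * hd
  have hC0 : 0 ≤ Real.sqrt 2 * Real.sqrt d ^ 3 * c :=
    mul_nonneg (mul_nonneg hs0.le (pow_nonneg (Real.sqrt_nonneg _) 3)) hc
  have hopn : ‖fderiv ℝ (hessTrace f) y - fderiv ℝ (hessTrace f) z‖
      ≤ Real.sqrt 2 * Real.sqrt d ^ 3 * c :=
    ContinuousLinearMap.opNorm_le_bound _ hC0 hDfull
  have hd32 : ((d:ℝ)) ^ ((3:ℝ)/2) = Real.sqrt d ^ 3 := by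
    rw [show ((3:ℝ)/2) = (1/2) * ((3:ℕ):ℝ) by norm_num,
      Real.rpow_mul (Nat.cast_nonneg d), Real.rpow_natCast]
    congr 1
    rw [← Real.sqrt_eq_rpow]
  constructor
  · rw [hd32]
    calc ‖fderiv ℝ (hessTrace f) y - fderiv ℝ (hessTrace f) z‖
        ≤ Real.sqrt 2 * Real.sqrt d ^ 3 * c := hopn
      _ = Real.sqrt 2 * Real.sqrt d ^ 3 * L3 * ‖y - z‖ := by rw [hcdef]; ring
  · have h1 := pow_le_pow_left₀ (norm_nonneg _) hopn 2
    calc ‖fderiv ℝ (hessTrace f) y - fderiv ℝ (hessTrace f) z‖ ^ 2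
        ≤ (Real.sqrt 2 * Real.sqrt d ^ 3 * c)^2 := h1
      _ = (Real.sqrt 2 ^ 2) * ((Real.sqrt d ^ 2)^3) * (L3^2 * ‖y - z‖^2) := by
          rw [hcdef]; ring
      _ = 2 * (d:ℝ)^3 * L3^2 * ‖y - z‖^2 := by
          rw [hs2, Real.sq_sqrt (Nat.cast_nonneg d)]; ring
end
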